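/- For a complex Hadamard matrix H of size N (unitary with all entries of modulus 1/√N) and the Latin-square permutation P = Σ_{k,l}|λ(l,k),k⟩⟨l,k| on C^N ⊗ C^N, every column of the unitary matrix W = P(I ⊗ H)P^T is a maximally entangled vector of C^N ⊗ C^N. -/

import Mathlib

open Matrix

open Kronecker

/-- A unit vector `v` of `ℂ^N ⊗ ℂ^N` is maximally entangled iff its reshaping
`R_{ab} = v_{(a,b)}` satisfies `Rᴴ R = (1/N)·I`, i.e. `√N·R` is unitary. -/
def MaxEnt (N : ℕ) (v : Fin N × Fin N → ℂ) : Prop :=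
  (Matrix.of fun a b : Fin N => v (a, b))ᴴ * (Matrix.of fun a b : Fin N => v (a, b)) =
    ((N : ℂ))⁻¹ • 1

/-- For a complex Hadamard matrix `H` (unitary with all entries
of modulus `1/√N`) and the Latin-square permutation `P`, every column of
`W = P (I ⊗ H) Pᵀ` is a maximally entangled vector of `ℂ^N ⊗ ℂ^N`. -/
theorem stmt12 (N : ℕ) (hN : 0 < N)
    (lam : Fin N → Fin N → Fin N)
    (hrow : ∀ j, Function.Bijective (lam j))
    (hcol : ∀ k, Function.Bijective fun j => lam j k)
    (P : Matrix (Fin N × Fin N) (Fin N × Fin N) ℂ)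
    (hP : P = Matrix.of fun p q => if p = (lam q.1 q.2, q.2) then 1 else 0)
    (H : Matrix (Fin N) (Fin N) ℂ)
    (hHunit : Hᴴ * H = 1)
    (hHmod : ∀ a b, ‖H a b‖ = (Real.sqrt N)⁻¹)
    (W : Matrix (Fin N × Fin N) (Fin N × Fin N) ℂ)
    (hW : W = P * ((1 : Matrix (Fin N) (Fin N) ℂ) ⊗ₖ H) * Pᵀ) :
    ∀ c, MaxEnt N fun p => W p c := by
  rintro ⟨c1, c2⟩
  -- the column-wise inverse of the Latin square
  set e : Fin N → (Fin N ≃ Fin N) := fun k => Equiv.ofBijective _ (hcol k) with he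
  have heapp : ∀ k j, e k j = lam j k := fun _ _ => rfl
  set j0 : Fin N := (e c2).symm c1 with hj0
  have hj0' : lam j0 c2 = c1 := (e c2).apply_symm_apply c1
  -- multiplying by P on the left just relabels rows
  have hProw : ∀ (p : Fin N × Fin N) (M : Matrix (Fin N × Fin N) (Fin N × Fin N) ℂ)
      (r : Fin N × Fin N), (P * M) p r = M ((e p.2).symm p.1, p.2) r := by
    intro p M r
    rw [Matrix.mul_apply, Finset.sum_eq_single ((e p.2).symm p.1, p.2)]
    · rw [hP]
      simp only [Matrix.of_apply]
      rw [if_pos, one_mul]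
      have : lam ((e p.2).symm p.1) p.2 = p.1 := (e p.2).apply_symm_apply p.1
      simp [this]
    · intro q _ hq
      rw [hP]
      simp only [Matrix.of_apply]
      rw [if_neg, zero_mul]
      intro hpq
      apply hq
      subst hpq
      exact Prod.ext ((e q.2).symm_apply_apply q.1).symm rfl
    · simp
  -- multiplying by Pᵀ on the right just relabels columns
  have hPcol : ∀ (M : Matrix (Fin N × Fin N) (Fin N × Fin N) ℂ)
      (p c : Fin N × Fin N), (M * Pᵀ) p c = M p ((e c.2).symm c.1, c.2) := by
    intro M p c
    rw [Matrix.mul_apply, Finset.sum_eq_single ((e c.2).symm c.1, c.2)]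
    · rw [hP]
      simp only [Matrix.transpose_apply, Matrix.of_apply]
      rw [if_pos, mul_one]
      have : lam ((e c.2).symm c.1) c.2 = c.1 := (e c.2).apply_symm_apply c.1
      simp [this]
    · intro r _ hr
      rw [hP]
      simp only [Matrix.transpose_apply, Matrix.of_apply]
      rw [if_neg, mul_zero]
      intro hcr
      apply hr
      subst hcr
      exact Prod.ext ((e r.2).symm_apply_apply r.1).symm rfl
    · simp
  -- explicit entries of W in the chosen column
  have hWval : ∀ a b : Fin N, W (a, b) (c1, c2) =
      if a = lam j0 b then H b c2 else 0 := by
    intro a b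
    rw [hW, hPcol, hProw]
    simp only [kroneckerMap_apply, Matrix.one_apply]
    have hiff : (e b).symm a = j0 ↔ a = lam j0 b := by
      rw [Equiv.symm_apply_eq, heapp]
    by_cases h : a = lam j0 b
    · rw [if_pos (hiff.mpr h), if_pos h, one_mul]
    · rw [if_neg (fun hh => h (hiff.mp hh)), if_neg h, zero_mul]
  -- now verify the condition
  unfold MaxEnt
  ext b b'
  simp only [Matrix.mul_apply, Matrix.conjTranspose_apply, Matrix.of_apply,
    Matrix.smul_apply, Matrix.one_apply, smul_eq_mul]
  have key : ∀ a : Fin N,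
      star (W (a, b) (c1, c2)) * W (a, b') (c1, c2) =
      if a = lam j0 b then (if a = lam j0 b' then star (H b c2) * H b' c2 else 0) else 0 := by
    intro a
    rw [hWval, hWval]
    by_cases h1 : a = lam j0 b
    · by_cases h2 : a = lam j0 b'
      · rw [if_pos h1, if_pos h2, if_pos h1, if_pos h2]
      · rw [if_pos h1, if_neg h2, if_pos h1, if_neg h2, mul_zero]
    · rw [if_neg h1, if_neg h1, star_zero, zero_mul]
  rw [Finset.sum_congr rfl (fun a _ => key a)]
  by_cases hbb : b = b'
  · subst hbb
    rw [if_pos rfl]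
    rw [Finset.sum_eq_single (lam j0 b)]
    · rw [if_pos rfl, if_pos rfl]
      have : star (H b c2) * H b c2 = (‖H b c2‖ : ℂ) ^ 2 := by
        rw [Complex.star_def, Complex.normSq_eq_conj_mul_self.symm, Complex.normSq_eq_norm_sq,
          Complex.ofReal_pow]
      rw [this, hHmod, mul_one, ← Complex.ofReal_pow, inv_pow,
        Real.sq_sqrt (Nat.cast_nonneg N), Complex.ofReal_inv, Complex.ofReal_natCast]
    · intro a _ ha; rw [if_neg ha]
    · simp
  · rw [if_neg hbb, mul_zero]
    apply Finset.sum_eq_zero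
    intro a _
    by_cases h1 : a = lam j0 b
    · rw [if_pos h1, if_neg]
      intro h2
      exact hbb ((hrow j0).1 (h1 ▸ h2 : lam j0 b = lam j0 b'))
    · rw [if_neg h1]
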